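/- Let C be a symmetric positive definite D×D real matrix, μ ∈ ℝ^D, β > 0, P ∈ ℝ^{D×S} with full column rank S, and p ∈ ℝ^D such that [P p] has full column rank S+1. Define G(Q) = μᵀ Q (Qᵀ C Q + β I)⁻¹ Qᵀ μ for a full-column-rank matrix Q. Then G([P p]) ≥ G(P), i.e., the receive discriminant gain is monotone nondecreasing when the compression subspace dimension increases by one. -/

import Mathlib

open Matrix

/-- Receive discriminant gain of a compression matrix `Q`. -/
noncomputable def recvDG {D S : ℕ} (C : Matrix (Fin D) (Fin D) ℝ) (μ : Fin D → ℝ)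
    (β : ℝ) (Q : Matrix (Fin D) (Fin S) ℝ) : ℝ :=
  μ ⬝ᵥ (Q *ᵥ ((Qᵀ * C * Q + β • (1 : Matrix (Fin S) (Fin S) ℝ))⁻¹ *ᵥ (Qᵀ *ᵥ μ)))

/-- Appending a column `p` to `P`. -/
def appendCol {D S : ℕ} (P : Matrix (Fin D) (Fin S) ℝ) (p : Fin D → ℝ) :
    Matrix (Fin D) (Fin (S + 1)) ℝ :=
  Matrix.of fun i j => Fin.lastCases (p i) (fun k => P i k) j

-- M(Q) is positive definite
lemma regM_posDef {D S : ℕ} {C : Matrix (Fin D) (Fin D) ℝ} (hC : C.PosDef)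
    {β : ℝ} (hβ : 0 < β) (Q : Matrix (Fin D) (Fin S) ℝ) :
    (Qᵀ * C * Q + β • (1 : Matrix (Fin S) (Fin S) ℝ)).PosDef := by
  have h1 : (Qᵀ * C * Q).PosSemidef := by
    have := hC.posSemidef.conjTranspose_mul_mul_same Q
    simpa using this
  have h2 : (β • (1 : Matrix (Fin S) (Fin S) ℝ)).PosDef := by
    refine Matrix.PosDef.of_dotProduct_mulVec_pos ?_ ?_
    · simp [Matrix.IsHermitian, Matrix.conjTranspose]
      ext i j
      by_cases h : i = j <;> simp [Matrix.one_apply, h, eq_comm]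
    · intro x hx
      have hxx : 0 < x ⬝ᵥ x := by
        have := Matrix.dotProduct_star_self_pos_iff (v := x) |>.2 hx
        simpa using this
      have : (β • (1 : Matrix (Fin S) (Fin S) ℝ)) *ᵥ x = β • x := by
        simp [Matrix.smul_mulVec]
      rw [this]
      simpa [dotProduct_smul] using mul_pos hβ hxx
  exact Matrix.PosDef.posSemidef_add h1 h2

-- key inequality: quadratic lower bound of v ⬝ M⁻¹ v
lemma quad_le {n : ℕ} {M : Matrix (Fin n) (Fin n) ℝ} (hM : M.PosDef)
    (v x : Fin n → ℝ) :
    2 * (v ⬝ᵥ x) - x ⬝ᵥ (M *ᵥ x) ≤ v ⬝ᵥ (M⁻¹ *ᵥ v) := by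
  set w : Fin n → ℝ := M⁻¹ *ᵥ v with hw
  have hMw : M *ᵥ w = v := by
    rw [hw, Matrix.mulVec_mulVec, Matrix.mul_nonsing_inv _ hM.det_pos.ne'.isUnit, Matrix.one_mulVec]
  have hsym : Mᵀ = M := hM.isHermitian
  have h0 : 0 ≤ (x - w) ⬝ᵥ (M *ᵥ (x - w)) := by
    have := hM.posSemidef.dotProduct_mulVec_nonneg (x - w)
    simpa using this
  have hMd : M *ᵥ (x - w) = M *ᵥ x - v := by
    rw [Matrix.mulVec_sub, hMw]
  rw [hMd] at h0
  have e1 : (x - w) ⬝ᵥ (M *ᵥ x - v)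
      = x ⬝ᵥ (M *ᵥ x) - x ⬝ᵥ v - w ⬝ᵥ (M *ᵥ x) + w ⬝ᵥ v := by
    simp [sub_dotProduct, dotProduct_sub]; ring
  have e2 : w ⬝ᵥ (M *ᵥ x) = v ⬝ᵥ x := by
    rw [Matrix.dotProduct_mulVec, ← Matrix.mulVec_transpose, hsym, hMw]
  have e3 : w ⬝ᵥ v = v ⬝ᵥ (M⁻¹ *ᵥ v) := by
    rw [dotProduct_comm, hw]
  have e4 : x ⬝ᵥ v = v ⬝ᵥ x := dotProduct_comm x v
  rw [e1, e2, e3, e4] at h0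
  linarith

theorem dg_monotone_in_dimension {D S : ℕ}
    (C : Matrix (Fin D) (Fin D) ℝ) (hC : C.PosDef) (hCsymm : C.IsSymm)
    (μ : Fin D → ℝ) (β : ℝ) (hβ : 0 < β)
    (P : Matrix (Fin D) (Fin S) ℝ) (hP : P.rank = S)
    (p : Fin D → ℝ) (hPp : (appendCol P p).rank = S + 1) :
    recvDG C μ β P ≤ recvDG C μ β (appendCol P p) := by
  set Q := appendCol P p with hQ
  set M₁ := Pᵀ * C * P + β • (1 : Matrix (Fin S) (Fin S) ℝ) with hM₁
  set M₂ := Qᵀ * C * Q + β • (1 : Matrix (Fin (S+1)) (Fin (S+1)) ℝ) with hM₂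
  have hM₁pd := regM_posDef hC hβ P
  have hM₂pd := regM_posDef hC hβ Q
  set v₁ : Fin S → ℝ := Pᵀ *ᵥ μ with hv₁
  set v₂ : Fin (S+1) → ℝ := Qᵀ *ᵥ μ with hv₂
  set x₀ : Fin S → ℝ := M₁⁻¹ *ᵥ v₁ with hx₀
  set x : Fin (S+1) → ℝ := Fin.snoc x₀ 0 with hx
  -- rewrite recvDG as dot products
  have hrec : ∀ (n : ℕ) (R : Matrix (Fin D) (Fin n) ℝ),
      recvDG C μ β R = (Rᵀ *ᵥ μ) ⬝ᵥ ((Rᵀ * C * R + β • 1)⁻¹ *ᵥ (Rᵀ *ᵥ μ)) := by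
    intro n R
    rw [recvDG, Matrix.dotProduct_mulVec, ← Matrix.mulVec_transpose]
  have hQx : Q *ᵥ x = P *ᵥ x₀ := by
    funext i
    show ∑ j, Q i j * x j = _
    rw [Fin.sum_univ_castSucc]
    simp [hx, hQ, appendCol, Matrix.mulVec, dotProduct]
  have hxx : x ⬝ᵥ x = x₀ ⬝ᵥ x₀ := by
    show ∑ j, x j * x j = _
    rw [Fin.sum_univ_castSucc]
    simp [hx, dotProduct]
  have hvx : v₂ ⬝ᵥ x = v₁ ⬝ᵥ x₀ := by
    show ∑ j, v₂ j * x j = _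
    rw [Fin.sum_univ_castSucc]
    simp only [hx, Fin.snoc_last, mul_zero, add_zero, Fin.snoc_castSucc]
    congr 1
    funext k
    congr 1
    show (Qᵀ *ᵥ μ) k.castSucc = (Pᵀ *ᵥ μ) k
    simp [Matrix.mulVec, dotProduct, hQ, appendCol]
  -- quadratic forms agree
  have hquad : ∀ {n : ℕ} (R : Matrix (Fin D) (Fin n) ℝ) (y : Fin n → ℝ),
      y ⬝ᵥ ((Rᵀ * C * R + β • 1) *ᵥ y) = (R *ᵥ y) ⬝ᵥ (C *ᵥ (R *ᵥ y)) + β * (y ⬝ᵥ y) := by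
    intro n R y
    rw [Matrix.add_mulVec, dotProduct_add]
    congr 1
    · rw [Matrix.mul_assoc, ← Matrix.mulVec_mulVec, Matrix.dotProduct_mulVec,
        ← Matrix.mulVec_transpose, Matrix.transpose_transpose, ← Matrix.mulVec_mulVec]
    · rw [Matrix.smul_mulVec, Matrix.one_mulVec, dotProduct_smul]
      simp [smul_eq_mul]
  have hqeq : x ⬝ᵥ (M₂ *ᵥ x) = x₀ ⬝ᵥ (M₁ *ᵥ x₀) := by
    rw [hM₂, hM₁, hquad Q x, hquad P x₀, hQx, hxx]
  -- recvDG P equals the quadratic lower bound value at x₀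
  have hM₁x₀ : M₁ *ᵥ x₀ = v₁ := by
    rw [hx₀, Matrix.mulVec_mulVec, Matrix.mul_nonsing_inv _ hM₁pd.det_pos.ne'.isUnit,
      Matrix.one_mulVec]
  have hP' : recvDG C μ β P = 2 * (v₂ ⬝ᵥ x) - x ⬝ᵥ (M₂ *ᵥ x) := by
    rw [hrec S P, ← hv₁, ← hM₁, ← hx₀, hvx, hqeq, hM₁x₀,
      dotProduct_comm x₀ v₁]
    ring
  rw [hP', hrec (S+1) Q, ← hv₂, ← hM₂]
  exact quad_le hM₂pd v₂ x
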